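/- For x ⊆ [n] with |x| = k, where n/2 ≤ k ≤ n: the sets *(x) ∩ x and *(x)\x satisfy |*(x) ∩ x| − |*(x)\x| = 2k − n; furthermore 1(x) and 0(x) have equal size (n − |*(x)|)/2. -/
import Mathlib


/-- `c_x(i,j) = |x ∩ [i,j]| - |[i,j] \ x|`. -/
def cfun (x : Finset ℕ) (i j : ℕ) : ℤ :=
  ((Finset.Icc i j ∩ x).card : ℤ) - ((Finset.Icc i j \ x).card : ℤ)

-- The signature value of position `i` in `x ⊆ [n]`: `1`, `0`, or `2` (for `*`).
open Classical in
noncomputable def sgv (n : ℕ) (x : Finset ℕ) (i : ℕ) : ℕ :=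
  if i ∈ x then (if ∃ j ∈ Finset.Ioc i n, cfun x i j = 0 then 1 else 2)
  else (if ∃ j ∈ Finset.Ico 1 i, cfun x j i = 0 then 0 else 2)


lemma cfun_eq_sum (x : Finset ℕ) (i j : ℕ) :
    cfun x i j = ∑ t ∈ Finset.Icc i j, (if t ∈ x then (1:ℤ) else -1) := by
  classical
  rw [Finset.sum_ite, Finset.sum_const, Finset.sum_const, Finset.filter_mem_eq_inter]
  rw [cfun, Finset.sdiff_eq_filter]
  ring_nf

lemma cfun_self (x : Finset ℕ) (i : ℕ) :
    cfun x i i = if i ∈ x then 1 else -1 := by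
  simp [cfun_eq_sum]

lemma cfun_split (x : Finset ℕ) {i t j : ℕ} (h1 : i ≤ t) (h2 : t ≤ j) :
    cfun x i j = cfun x i t + cfun x (t+1) j := by
  rw [cfun_eq_sum, cfun_eq_sum, cfun_eq_sum, Finset.Icc_add_one_left_eq_Ioc,
    ← Finset.sum_union (by
      rw [Finset.disjoint_left]; intro a ha hb
      simp only [Finset.mem_Icc, Finset.mem_Ioc] at ha hb; omega),
    show Finset.Icc i t ∪ Finset.Ioc t j = Finset.Icc i j from by
      ext a; simp only [Finset.mem_union, Finset.mem_Icc, Finset.mem_Ioc]; omega]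

lemma ivt_r (x : Finset ℕ) {i j : ℕ} (hi : i ∈ x) (hij : i ≤ j) (hneg : cfun x i j < 0) :
    ∃ t, i < t ∧ t ≤ j ∧ cfun x i t = 0 := by
  induction j, hij using Nat.le_induction with
  | base => rw [cfun_self, if_pos hi] at hneg; omega
  | succ j hij ih =>
    rw [cfun_split x hij (Nat.le_succ j), cfun_self] at hneg
    by_cases h : cfun x i j < 0
    · obtain ⟨t, ht1, ht2, ht3⟩ := ih h
      exact ⟨t, ht1, ht2.trans (Nat.le_succ j), ht3⟩
    · push_neg at h
      have h0 : cfun x i j = 0 := by split_ifs at hneg <;> omega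
      have hij' : i < j := lt_of_le_of_ne hij (by
        rintro rfl; rw [cfun_self, if_pos hi] at h0; omega)
      exact ⟨j, hij', Nat.le_succ j, h0⟩

lemma ivt_l_aux (x : Finset ℕ) {j : ℕ} (hj : j ∉ x) :
    ∀ d i, j - i = d → i ≤ j → 0 < cfun x i j → ∃ t, i < t ∧ t ≤ j ∧ cfun x t j = 0 := by
  intro d
  induction d with
  | zero =>
    intro i h0 hij hpos
    have : i = j := by omega
    subst this
    rw [cfun_self, if_neg hj] at hpos; omega
  | succ d ih =>
    intro i hd hij hpos
    have hij' : i < j := by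
      rcases Nat.lt_or_ge i j with h | h
      · exact h
      · have : i = j := le_antisymm hij h
        subst this; rw [cfun_self, if_neg hj] at hpos; omega
    rw [cfun_split x (le_refl i) hij, cfun_self] at hpos
    by_cases h : 0 < cfun x (i+1) j
    · obtain ⟨t, ht1, ht2, ht3⟩ := ih (i+1) (by omega) (by omega) h
      exact ⟨t, by omega, ht2, ht3⟩
    · push_neg at h
      have h0 : cfun x (i+1) j = 0 := by split_ifs at hpos <;> omega
      exact ⟨i+1, by omega, by omega, h0⟩

lemma ivt_l (x : Finset ℕ) {i j : ℕ} (hj : j ∉ x) (hij : i ≤ j) (hpos : 0 < cfun x i j) :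
    ∃ t, i < t ∧ t ≤ j ∧ cfun x t j = 0 :=
  ivt_l_aux x hj (j - i) i rfl hij hpos


lemma sgv_eq_one (n : ℕ) (x : Finset ℕ) (i : ℕ) :
    sgv n x i = 1 ↔ i ∈ x ∧ ∃ j ∈ Finset.Ioc i n, cfun x i j = 0 := by
  unfold sgv; split_ifs with h1 h2 h3 <;> simp_all

lemma sgv_eq_zero (n : ℕ) (x : Finset ℕ) (i : ℕ) :
    sgv n x i = 0 ↔ i ∉ x ∧ ∃ j ∈ Finset.Ico 1 i, cfun x j i = 0 := by
  unfold sgv; split_ifs with h1 h2 h3 <;> simp_all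

lemma sgv_of_mem (n : ℕ) (x : Finset ℕ) {i : ℕ} (h : i ∈ x) :
    sgv n x i = 1 ∨ sgv n x i = 2 := by
  unfold sgv; split_ifs <;> simp_all

lemma sgv_of_notMem (n : ℕ) (x : Finset ℕ) {i : ℕ} (h : i ∉ x) :
    sgv n x i = 0 ∨ sgv n x i = 2 := by
  unfold sgv; split_ifs <;> simp_all

lemma card_one_eq_card_zero (n : ℕ) (x : Finset ℕ) :
    ((Finset.Icc 1 n).filter (fun i => sgv n x i = 1)).card =
      ((Finset.Icc 1 n).filter (fun i => sgv n x i = 0)).card := by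
  classical
  apply Finset.card_bij (fun i _ => sInf {j | i < j ∧ cfun x i j = 0})
  -- maps to
  · intro i hi
    rw [Finset.mem_filter, sgv_eq_one] at hi
    obtain ⟨hin, hix, j, hj, hcj⟩ := hi
    rw [Finset.mem_Ioc] at hj
    rw [Finset.mem_Icc] at hin
    have hne : {j | i < j ∧ cfun x i j = 0}.Nonempty := ⟨j, hj.1, hcj⟩
    set p := sInf {j | i < j ∧ cfun x i j = 0} with hp
    obtain ⟨hip, hcp⟩ : i < p ∧ cfun x i p = 0 := Nat.sInf_mem hne
    have hpn : p ≤ n := (Nat.sInf_le (by exact ⟨hj.1, hcj⟩)).trans hj.2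
    have hmin : ∀ t, i < t → t < p → cfun x i t ≠ 0 := by
      intro t h1 h2 h3
      exact Nat.notMem_of_lt_sInf h2 ⟨h1, h3⟩
    -- p ∉ x
    have hpx : p ∉ x := by
      intro hpx
      obtain ⟨q, hq⟩ : ∃ q, p = q + 1 := ⟨p - 1, by omega⟩
      have hiq : i ≤ q := by omega
      have hcp' := hcp
      rw [hq, cfun_split x hiq (Nat.le_succ q), cfun_self, if_pos (hq ▸ hpx)] at hcp'
      have hneg : cfun x i q < 0 := by omega
      obtain ⟨t, ht1, ht2, ht3⟩ := ivt_r x hix hiq hneg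
      exact hmin t ht1 (by omega) ht3
    rw [Finset.mem_filter, sgv_eq_zero]
    refine ⟨Finset.mem_Icc.mpr ⟨by omega, hpn⟩, hpx, i, Finset.mem_Ico.mpr ⟨hin.1, hip⟩, hcp⟩
  -- injective
  · intro i hi i' hi' heq
    rw [Finset.mem_filter, sgv_eq_one] at hi hi'
    by_contra hne
    -- wlog helper inline
    have key : ∀ a b : ℕ, a < b → a ∈ x →
        (a < sInf {j | a < j ∧ cfun x a j = 0} ∧ cfun x a (sInf {j | a < j ∧ cfun x a j = 0}) = 0) →
        (∀ t, a < t → t < sInf {j | a < j ∧ cfun x a j = 0} → cfun x a t ≠ 0) →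
        sInf {j | a < j ∧ cfun x a j = 0} = sInf {j | b < j ∧ cfun x b j = 0} →
        (b < sInf {j | b < j ∧ cfun x b j = 0} ∧ cfun x b (sInf {j | b < j ∧ cfun x b j = 0}) = 0) →
        False := by
      rintro a b hab hax ⟨hap, hacp⟩ hamin hpeq ⟨hbp, hbcp⟩
      rw [← hpeq] at hbp hbcp
      obtain ⟨q, rfl⟩ : ∃ q, b = q + 1 := ⟨b - 1, by omega⟩
      have haq : a ≤ q := by omega
      have hsp : cfun x a (sInf {j | a < j ∧ cfun x a j = 0}) =
          cfun x a q + cfun x (q+1) (sInf {j | a < j ∧ cfun x a j = 0}) :=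
        cfun_split x haq (by omega)
      rw [hacp, hbcp] at hsp
      have hq0 : cfun x a q = 0 := by omega
      rcases Nat.lt_or_ge a q with h | h
      · exact hamin q h (by omega) hq0
      · have : a = q := by omega
        subst this
        rw [cfun_self, if_pos hax] at hq0; omega
    have ne' : i ≠ i' := hne
    obtain ⟨hin, hix, j, hj, hcj⟩ := hi
    obtain ⟨hin', hix', j', hj', hcj'⟩ := hi'
    rw [Finset.mem_Ioc] at hj hj'
    have h1 : i < sInf {j | i < j ∧ cfun x i j = 0} ∧
        cfun x i (sInf {j | i < j ∧ cfun x i j = 0}) = 0 := Nat.sInf_mem (⟨j, ⟨hj.1, hcj⟩⟩ : {j | i < j ∧ cfun x i j = 0}.Nonempty)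
    have h1' : i' < sInf {j | i' < j ∧ cfun x i' j = 0} ∧
        cfun x i' (sInf {j | i' < j ∧ cfun x i' j = 0}) = 0 := Nat.sInf_mem (⟨j', ⟨hj'.1, hcj'⟩⟩ : {j | i' < j ∧ cfun x i' j = 0}.Nonempty)
    have hmin : ∀ t, i < t → t < sInf {j | i < j ∧ cfun x i j = 0} → cfun x i t ≠ 0 :=
      fun t ht1 ht2 ht3 => Nat.notMem_of_lt_sInf ht2 ⟨ht1, ht3⟩
    have hmin' : ∀ t, i' < t → t < sInf {j | i' < j ∧ cfun x i' j = 0} → cfun x i' t ≠ 0 :=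
      fun t ht1 ht2 ht3 => Nat.notMem_of_lt_sInf ht2 ⟨ht1, ht3⟩
    rcases Nat.lt_or_ge i i' with h | h
    · exact key i i' h hix h1 hmin heq h1'
    · exact key i' i (by omega) hix' h1' hmin' heq.symm h1
  -- surjective
  · intro b hb
    rw [Finset.mem_filter, sgv_eq_zero] at hb
    obtain ⟨hbn, hbx, j, hj, hcj⟩ := hb
    rw [Finset.mem_Ico] at hj
    rw [Finset.mem_Icc] at hbn
    set T := (Finset.Ico 1 b).filter (fun t => cfun x t b = 0) with hT
    have hTne : T.Nonempty := ⟨j, by simp only [hT, Finset.mem_filter, Finset.mem_Ico]; exact ⟨hj, hcj⟩⟩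
    set i := T.max' hTne with hi
    have hiT : i ∈ T := T.max'_mem hTne
    rw [hT, Finset.mem_filter, Finset.mem_Ico] at hiT
    obtain ⟨⟨hi1, hib⟩, hic⟩ := hiT
    have hmax : ∀ t, 1 ≤ t → t < b → cfun x t b = 0 → t ≤ i := by
      intro t h1 h2 h3
      exact T.le_max' t (by simp only [hT, Finset.mem_filter, Finset.mem_Ico]; exact ⟨⟨h1, h2⟩, h3⟩)
    have hcbb : cfun x b b = -1 := by rw [cfun_self, if_neg hbx]
    -- i ∈ x
    have hix : i ∈ x := by
      by_contra hix
      have hsp : cfun x i b = cfun x i i + cfun x (i+1) b := cfun_split x (le_refl i) (by omega)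
      rw [hic, cfun_self, if_neg hix] at hsp
      have hpos : 0 < cfun x (i+1) b := by omega
      obtain ⟨t, ht1, ht2, ht3⟩ := ivt_l x hbx (by omega) hpos
      have htb : t < b := by
        rcases Nat.lt_or_ge t b with h | h
        · exact h
        · have : t = b := by omega
          subst this; omega
      have := hmax t (by omega) htb ht3
      omega
    -- sInf = b
    have hbmem : b ∈ {j | i < j ∧ cfun x i j = 0} := ⟨hib, hic⟩
    have hinf : sInf {j | i < j ∧ cfun x i j = 0} = b := by
      obtain ⟨hp1, hp2⟩ : i < sInf {j | i < j ∧ cfun x i j = 0} ∧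
          cfun x i (sInf {j | i < j ∧ cfun x i j = 0}) = 0 := Nat.sInf_mem (⟨b, hbmem⟩ : {j | i < j ∧ cfun x i j = 0}.Nonempty)
      set p := sInf {j | i < j ∧ cfun x i j = 0} with hp
      have hpb : p ≤ b := Nat.sInf_le hbmem
      rcases Nat.lt_or_ge p b with h | h
      · exfalso
        have hsp : cfun x i b = cfun x i p + cfun x (p+1) b := cfun_split x (by omega) (by omega)
        rw [hic, hp2] at hsp
        have hc0 : cfun x (p+1) b = 0 := by omega
        have hp1b : p + 1 < b := by
          rcases Nat.lt_or_ge (p+1) b with h' | h'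
          · exact h'
          · have : p + 1 = b := by omega
            rw [this, hcbb] at hc0; omega
        have := hmax (p+1) (by omega) hp1b hc0
        omega
      · omega
    exact ⟨i, Finset.mem_filter.mpr ⟨Finset.mem_Icc.mpr ⟨hi1, by omega⟩,
      (sgv_eq_one n x i).mpr ⟨hix, b, Finset.mem_Ioc.mpr ⟨hib, hbn.2⟩, hic⟩⟩, hinf⟩


/-- for `x ⊆ [n]` with `|x| = k ≥ n/2`:
`|*(x) ∩ x| - |*(x) \ x| = 2k - n`, and `|1(x)| = |0(x)| = (n - |*(x)|)/2`. -/
theorem stmt_12 (n : ℕ) (x : Finset ℕ) (hx : x ⊆ Finset.Icc 1 n)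
    (hk : n ≤ 2 * x.card) :
    (((Finset.Icc 1 n).filter (fun i => sgv n x i = 2) ∩ x).card + n =
      (((Finset.Icc 1 n).filter (fun i => sgv n x i = 2)) \ x).card + 2 * x.card) ∧
    ((Finset.Icc 1 n).filter (fun i => sgv n x i = 1)).card =
      ((Finset.Icc 1 n).filter (fun i => sgv n x i = 0)).card ∧
    2 * ((Finset.Icc 1 n).filter (fun i => sgv n x i = 1)).card +
      ((Finset.Icc 1 n).filter (fun i => sgv n x i = 2)).card = n := by
  classical
  set S1 := (Finset.Icc 1 n).filter (fun i => sgv n x i = 1) with hS1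
  set S0 := (Finset.Icc 1 n).filter (fun i => sgv n x i = 0) with hS0
  set S2 := (Finset.Icc 1 n).filter (fun i => sgv n x i = 2) with hS2
  have hab : S1.card = S0.card := card_one_eq_card_zero n x
  -- x = S1 ∪ (S2 ∩ x)
  have hxeq : S1 ∪ S2 ∩ x = x := by
    ext i
    simp only [Finset.mem_union, Finset.mem_inter, hS1, hS2, Finset.mem_filter]
    constructor
    · rintro (⟨_, h⟩ | ⟨_, h⟩)
      · exact ((sgv_eq_one n x i).mp h).1
      · exact h
    · intro hix
      have hin : i ∈ Finset.Icc 1 n := hx hix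
      rcases sgv_of_mem n x hix with h | h
      · exact Or.inl ⟨hin, h⟩
      · exact Or.inr ⟨⟨hin, h⟩, hix⟩
  have hdisj1 : Disjoint S1 (S2 ∩ x) := by
    rw [Finset.disjoint_left]
    intro a ha hb
    rw [hS1, Finset.mem_filter] at ha
    rw [Finset.mem_inter, hS2, Finset.mem_filter] at hb
    omega
  have hcard_x : S1.card + (S2 ∩ x).card = x.card := by
    rw [← Finset.card_union_of_disjoint hdisj1, hxeq]
  -- Icc \ x = S0 ∪ (S2 \ x)
  have hceq : S0 ∪ S2 \ x = Finset.Icc 1 n \ x := by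
    ext i
    simp only [Finset.mem_union, Finset.mem_sdiff, hS0, hS2, Finset.mem_filter]
    constructor
    · rintro (⟨h1, h⟩ | ⟨⟨h1, _⟩, h⟩)
      · exact ⟨h1, ((sgv_eq_zero n x i).mp h).1⟩
      · exact ⟨h1, h⟩
    · rintro ⟨hin, hix⟩
      rcases sgv_of_notMem n x hix with h | h
      · exact Or.inl ⟨hin, h⟩
      · exact Or.inr ⟨⟨hin, h⟩, hix⟩
  have hdisj0 : Disjoint S0 (S2 \ x) := by
    rw [Finset.disjoint_left]
    intro a ha hb
    rw [hS0, Finset.mem_filter] at ha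
    rw [Finset.mem_sdiff, hS2, Finset.mem_filter] at hb
    omega
  have hcard_c : S0.card + (S2 \ x).card = (Finset.Icc 1 n \ x).card := by
    rw [← Finset.card_union_of_disjoint hdisj0, hceq]
  have htot : x.card + (Finset.Icc 1 n \ x).card = n := by
    have h1 := Finset.card_sdiff_add_card_eq_card hx
    have h2 : (Finset.Icc 1 n).card = n := by simp
    omega
  have hS2split : (S2 ∩ x).card + (S2 \ x).card = S2.card :=
    Finset.card_inter_add_card_sdiff S2 x
  refine ⟨by omega, hab, by omega⟩
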